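/- Let u ∈ ℚ \ {0, 1} and let g_u(x) = x^{-1}∏_{t=0}^∞ (1 + u x^{-2^t}) be viewed as a Laurent series over ℚ. Then g_u is not a rational function: g_u ∉ ℚ(x). -/

import Mathlib

open Polynomial Finset
open scoped Classical

noncomputable section

variable {F : Type*} [Field F] [CharZero F]

/-- The infinite product `∏_{t=0}^∞ P(T^{d^t})` (with `T = x⁻¹`), defined coefficientwise
via the stabilizing finite truncated products (valid when `P(0) = 1`). -/
def infProd (P : Polynomial F) (d : ℕ) : PowerSeries F :=
  PowerSeries.mk fun n => (∏ t ∈ Finset.range (n + 1), P.comp (Polynomial.X ^ d ^ t)).coeff n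

/-- The element `x = T⁻¹` of `F((T))`. -/
def xx : LaurentSeries F := ((PowerSeries.X : PowerSeries F) : LaurentSeries F)⁻¹

/-- Evaluation of a polynomial in the variable `x` inside `F((x⁻¹))`. -/
def pev (p : Polynomial F) : LaurentSeries F := Polynomial.aeval (xx : LaurentSeries F) p

/-- Degree valuation `‖f‖` on `F((x⁻¹))`, with `‖0‖ = ⊥`. -/
def degB (f : LaurentSeries F) : WithBot ℤ := if f = 0 then ⊥ else (-(f.order) : ℤ)

/-- `g_u(x) = x⁻¹ ∏_{t=0}^∞ (1 + u x^{-2^t})`. -/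
def gU (u : F) : LaurentSeries F :=
  (xx : LaurentSeries F)⁻¹ *
    ((infProd (1 + Polynomial.C u * Polynomial.X) 2 : PowerSeries F) : LaurentSeries F)


/-- binary digit sum -/
def sB (n : ℕ) : ℕ := (Nat.digits 2 n).sum

lemma sB_zero : sB 0 = 0 := by simp [sB]

lemma sB_two_mul (n : ℕ) : sB (2 * n) = sB n := by
  rcases Nat.eq_zero_or_pos n with h | h
  · simp [h]
  · unfold sB
    rw [Nat.digits_def' (by norm_num : (1:ℕ) < 2) (by omega)]
    simp [Nat.mul_div_cancel_left _ (by norm_num : 0 < 2), Nat.mul_mod_right]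

lemma sB_two_mul_add_one (n : ℕ) : sB (2 * n + 1) = sB n + 1 := by
  unfold sB
  rw [Nat.digits_def' (by norm_num : (1:ℕ) < 2) (by omega)]
  have h1 : (2 * n + 1) % 2 = 1 := by omega
  have h2 : (2 * n + 1) / 2 = n := by omega
  rw [h1, h2]
  simp [Nat.add_comm]

lemma sB_add_pow (m : ℕ) : ∀ r < 2 ^ m, sB (r + 2 ^ m) = sB r + 1 := by
  induction m with
  | zero =>
    intro r hr
    interval_cases r
    simp [sB]
  | succ m ih =>
    intro r hr
    rcases Nat.even_or_odd r with ⟨q, hq⟩ | ⟨q, hq⟩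
    · have hq2 : q < 2 ^ m := by rw [pow_succ] at hr; omega
      have : r + 2 ^ (m+1) = 2 * (q + 2 ^ m) := by rw [pow_succ]; omega
      rw [this, sB_two_mul, ih q hq2, hq, ← two_mul, sB_two_mul]
    · have hq2 : q < 2 ^ m := by rw [pow_succ] at hr; omega
      have : r + 2 ^ (m+1) = 2 * (q + 2 ^ m) + 1 := by rw [pow_succ]; omega
      rw [this, sB_two_mul_add_one, ih q hq2, hq, sB_two_mul_add_one]

lemma sum_range_two_mul (n : ℕ) (f : ℕ → ℚ) :
    ∑ i ∈ range (2 * n), f i = ∑ k ∈ range n, (f (2 * k) + f (2 * k + 1)) := by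
  induction n with
  | zero => simp
  | succ n ih =>
    rw [Nat.mul_succ, sum_range_succ, sum_range_succ, sum_range_succ, ih]
    ring

lemma key (u : ℚ) (h0 : u ≠ 0) (h1 : u ≠ 1) :
    ∀ m (c : ℕ → ℚ), (∃ i, i < m ∧ c i ≠ 0) → (∀ i, m ≤ i → c i = 0) →
    (∀ j : ℕ, ∑ i ∈ range m, c i * u ^ sB (j + i) = 0) → False := by
  intro m
  induction m using Nat.strong_induction_on with
  | _ m IH =>
  intro c hc hsupp H
  obtain ⟨i0, hi0m, hi0⟩ := hc
  have hm0 : m ≠ 0 := by omega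
  -- case m = 1
  rcases Nat.lt_or_ge m 2 with hm1 | hm2
  · have hm : m = 1 := by omega
    subst hm
    have h := H 0
    simp only [range_one, sum_singleton, Nat.add_zero] at h
    have : i0 = 0 := by omega
    subst this
    rcases mul_eq_zero.1 h with h | h
    · exact hi0 h
    · exact pow_ne_zero _ h0 h
  -- extended recurrence
  have Hext : ∀ n, m ≤ n → ∀ j : ℕ, ∑ i ∈ range n, c i * u ^ sB (j + i) = 0 := by
    intro n hn j
    rw [← sum_subset (range_subset_range.2 hn)
      (fun i _ hi => by rw [hsupp i (by simpa using hi), zero_mul])]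
    exact H j
  set ce : ℕ → ℚ := fun k => c (2 * k) + u * c (2 * k + 1) with hce_def
  set cm1 : ℕ → ℚ := fun k => match k with | 0 => 0 | (k + 1) => c (2 * k + 1) with hcm1_def
  set co : ℕ → ℚ := fun k => u * c (2 * k) + cm1 k with hco_def
  -- even-derived recurrence
  have He : ∀ r : ℕ, ∑ k ∈ range m, ce k * u ^ sB (r + k) = 0 := by
    intro r
    have h2 := Hext (2 * m) (by omega) (2 * r)
    rw [sum_range_two_mul] at h2
    rw [← h2]
    refine sum_congr rfl fun k _ => ?_
    have e1 : 2 * r + 2 * k = 2 * (r + k) := by ring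
    have e2 : 2 * r + (2 * k + 1) = 2 * (r + k) + 1 := by ring
    rw [e1, e2, sB_two_mul, sB_two_mul_add_one, pow_succ, hce_def]
    ring
  -- odd-derived recurrence
  have Ho : ∀ r : ℕ, ∑ k ∈ range (m + 1), co k * u ^ sB (r + k) = 0 := by
    intro r
    have h2 := Hext (2 * m) (by omega) (2 * r + 1)
    rw [sum_range_two_mul] at h2
    have hA : ∑ k ∈ range m,
        (u * c (2 * k) * u ^ sB (r + k) + cm1 (k + 1) * u ^ sB (r + (k + 1))) = 0 := by
      rw [← h2]
      refine sum_congr rfl fun k _ => ?_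
      have e1 : 2 * r + 1 + 2 * k = 2 * (r + k) + 1 := by ring
      have e2 : 2 * r + 1 + (2 * k + 1) = 2 * (r + (k + 1)) := by ring
      rw [e1, e2, sB_two_mul, sB_two_mul_add_one, pow_succ, hcm1_def]
      ring
    have hsplit : ∑ k ∈ range (m + 1), co k * u ^ sB (r + k)
        = ∑ k ∈ range (m + 1), u * c (2 * k) * u ^ sB (r + k)
          + ∑ k ∈ range (m + 1), cm1 k * u ^ sB (r + k) := by
      rw [← sum_add_distrib]
      exact sum_congr rfl fun k _ => by rw [hco_def]; ring
    rw [hsplit, sum_range_succ, hsupp (2 * m) (by omega), mul_zero, zero_mul, add_zero,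
      Finset.sum_range_succ' (fun k => cm1 k * u ^ sB (r + k)) m]
    have : cm1 0 * u ^ sB (r + 0) = 0 := by simp [hcm1_def]
    rw [this, add_zero, ← sum_add_distrib]
    exact hA
  by_cases hce0 : ∀ k, ce k = 0
  · by_cases hco0 : ∀ k, co k = 0
    · -- all coefficients vanish : contradiction
      have hz : ∀ i, c i = 0 := by
        intro i
        induction i using Nat.strong_induction_on with
        | _ i IH2 =>
        rcases Nat.even_or_odd i with ⟨k, hk⟩ | ⟨k, hk⟩
        · subst hk
          rcases Nat.eq_zero_or_pos k with hk0 | hk0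
          · subst hk0
            have := hco0 0
            simp only [hco_def, hcm1_def] at this
            have : u * c (2 * 0) = 0 := by simpa using this
            rcases mul_eq_zero.1 this with h | h
            · exact absurd h h0
            · simpa using h
          · obtain ⟨k', rfl⟩ : ∃ k', k = k' + 1 := ⟨k - 1, by omega⟩
            have h1 := hco0 (k' + 1)
            simp only [hco_def, hcm1_def] at h1
            have h2 : c (2 * k' + 1) = 0 := IH2 (2 * k' + 1) (by omega)
            rw [h2, add_zero] at h1
            rcases mul_eq_zero.1 h1 with h | h
            · exact absurd h h0
            · convert h using 2; omega
        · subst hk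
          have h1 := hce0 k
          simp only [hce_def] at h1
          rw [IH2 (2 * k) (by omega), zero_add] at h1
          rcases mul_eq_zero.1 h1 with h | h
          · exact absurd h h0
          · exact h
      exact hi0 (hz i0)
    · push_neg at hco0
      obtain ⟨k0, hk0⟩ := hco0
      have hcosupp : ∀ k, m / 2 + 1 ≤ k → co k = 0 := by
        intro k hk
        have h1 : c (2 * k) = 0 := hsupp _ (by omega)
        have h2 : cm1 k = 0 := by
          obtain ⟨k', rfl⟩ : ∃ k', k = k' + 1 := ⟨k - 1, by omega⟩
          simp only [hcm1_def]
          exact hsupp _ (by omega)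
        simp [hco_def, h1, h2]
      rcases Nat.lt_or_ge m 3 with hm3 | hm3
      · -- m = 2 : direct argument
        have hm : m = 2 := by omega
        subst hm
        have hc1 : c 1 ≠ 0 := by
          intro h
          have h00 := hce0 0
          simp only [hce_def] at h00
          norm_num [h] at h00
          interval_cases i0 <;> [exact hi0 h00; exact hi0 h]
        have hrec : ∀ j : ℕ, c 0 * u ^ sB j + c 1 * u ^ sB (j + 1) = 0 := by
          intro j
          have := H j
          simpa [Finset.sum_range_succ] using this
        have hc0 : c 0 = -(u * c 1) := by
          have := hce0 0
          simp only [hce_def] at this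
          have h' : c 0 + u * c 1 = 0 := by simpa using this
          linarith
        have hr1 := hrec 1
        have e1 : sB 1 = 1 := by
          have := sB_two_mul_add_one 0; simpa [sB_zero] using this
        have e2 : sB 2 = 1 := by
          have := sB_two_mul 1; rw [show 2*1 = 2 by norm_num] at this; rw [this, e1]
        rw [hc0, e1, show (1:ℕ)+1 = 2 by norm_num, e2] at hr1
        have hfact : c 1 * (u * (u - 1)) = 0 := by linear_combination -hr1
        rcases mul_eq_zero.1 hfact with h | h
        · exact hc1 h
        · rcases mul_eq_zero.1 h with h | h
          · exact h0 h
          · exact h1 (by linarith)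

      · -- m ≥ 3 : recurse with co
        refine IH (m / 2 + 1) (by omega) co ⟨k0, ?_, hk0⟩ hcosupp ?_
        · by_contra hk
          exact hk0 (hcosupp k0 (by omega))
        · intro j
          have hss := sum_subset (f := fun i => co i * u ^ sB (j + i))
            (range_subset_range.2 (by omega : m / 2 + 1 ≤ m + 1))
            (fun i _ hi => by simp [hcosupp i (by simpa using hi)])
          rw [hss]
          exact Ho j
  · push_neg at hce0
    obtain ⟨k0, hk0⟩ := hce0
    have hcesupp : ∀ k, (m + 1) / 2 ≤ k → ce k = 0 := by
      intro k hk
      have h1 : c (2 * k) = 0 := hsupp _ (by omega)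
      have h2 : c (2 * k + 1) = 0 := hsupp _ (by omega)
      simp [hce_def, h1, h2]
    refine IH ((m + 1) / 2) (by omega) ce ⟨k0, ?_, hk0⟩ hcesupp ?_
    · by_contra hk
      exact hk0 (hcesupp k0 (by omega))
    · intro j
      have hss := sum_subset (f := fun i => ce i * u ^ sB (j + i))
        (range_subset_range.2 (by omega : (m + 1) / 2 ≤ m))
        (fun i _ hi => by simp [hcesupp i (by simpa using hi)])
      rw [hss]
      exact He j

lemma prod_coeff (u : ℚ) : ∀ m n, (∏ t ∈ range m, (1 + C u * X ^ 2 ^ t : ℚ[X])).coeff n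
    = if n < 2 ^ m then u ^ sB n else 0 := by
  intro m
  induction m with
  | zero =>
    intro n
    rcases Nat.eq_zero_or_pos n with rfl | hn
    · simp [sB_zero]
    · rw [range_zero, prod_empty, coeff_one, if_neg (by omega), if_neg (by omega)]
  | succ m ih =>
    intro n
    rw [prod_range_succ]
    have expand : (∏ t ∈ range m, (1 + C u * X ^ 2 ^ t : ℚ[X])) * (1 + C u * X ^ 2 ^ m)
        = (∏ t ∈ range m, (1 + C u * X ^ 2 ^ t : ℚ[X]))
          + C u * ((∏ t ∈ range m, (1 + C u * X ^ 2 ^ t : ℚ[X])) * X ^ 2 ^ m) := by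
      ring
    rw [expand, coeff_add, coeff_C_mul, coeff_mul_X_pow', ih n]
    by_cases hn1 : n < 2 ^ m
    · rw [if_pos hn1, if_neg (by omega), mul_zero, add_zero,
        if_pos (lt_of_lt_of_le hn1 (Nat.pow_le_pow_right (by norm_num) (by omega)))]
    · rw [if_neg hn1, zero_add, if_pos (by omega), ih (n - 2 ^ m)]
      by_cases hn2 : n < 2 ^ (m + 1)
      · have hlt : n - 2 ^ m < 2 ^ m := by rw [pow_succ] at hn2; omega
        rw [if_pos hlt, if_pos hn2]
        have hs := sB_add_pow m (n - 2 ^ m) hlt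
        rw [show n - 2 ^ m + 2 ^ m = n by omega] at hs
        rw [hs, pow_succ]
        ring
      · have hge : ¬ (n - 2 ^ m < 2 ^ m) := by rw [pow_succ] at hn2; omega
        rw [if_neg hge, mul_zero, if_neg hn2]

lemma infProd_coeff (u : ℚ) (n : ℕ) :
    PowerSeries.coeff n (infProd (1 + C u * X) 2) = u ^ sB n := by
  unfold infProd
  rw [PowerSeries.coeff_mk]
  have hc : ∀ t ∈ range (n + 1),
      ((1 + C u * X : ℚ[X]).comp (X ^ 2 ^ t)) = 1 + C u * X ^ 2 ^ t := fun t _ => by simp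
  rw [prod_congr rfl hc, prod_coeff u (n + 1) n,
    if_pos (lt_of_lt_of_le (Nat.lt_two_pow_self (n := n)) (Nat.pow_le_pow_right (by norm_num) (by omega)))]

lemma Yne : ((PowerSeries.X : PowerSeries ℚ) : LaurentSeries ℚ) ≠ 0 := by
  intro h
  exact PowerSeries.X_ne_zero (HahnSeries.ofPowerSeries_injective (by rw [h, map_zero]))

lemma reflect_sum (N : ℕ) (s : Finset ℕ) (f : ℕ → ℚ[X]) :
    reflect N (∑ i ∈ s, f i) = ∑ i ∈ s, reflect N (f i) := by
  classical
  induction s using Finset.cons_induction with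
  | empty => simp
  | cons a s ha ih => rw [Finset.sum_cons, Finset.sum_cons, reflect_add, ih]

lemma natDegree_reflect_le (N : ℕ) (r : ℚ[X]) (hr : r.natDegree ≤ N) :
    (reflect N r).natDegree ≤ N := by
  refine natDegree_le_iff_coeff_eq_zero.2 fun k hk => ?_
  rw [coeff_reflect, revAt_eq_self_of_lt hk]
  exact coeff_eq_zero_of_natDegree_lt (by omega)

lemma pev_mul_pow (N : ℕ) (r : ℚ[X]) (hr : r.natDegree ≤ N) :
    pev r * ((PowerSeries.X : PowerSeries ℚ) : LaurentSeries ℚ) ^ N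
      = (((reflect N r : ℚ[X]) : PowerSeries ℚ) : LaurentSeries ℚ) := by
  set Y : LaurentSeries ℚ := ((PowerSeries.X : PowerSeries ℚ) : LaurentSeries ℚ) with hYdef
  set Ψ : ℚ[X] →+* LaurentSeries ℚ :=
    (HahnSeries.ofPowerSeries ℤ ℚ).comp Polynomial.coeToPowerSeries.ringHom with hΨdef
  have hΨ : ∀ s : ℚ[X], Ψ s = ((s : PowerSeries ℚ) : LaurentSeries ℚ) := fun s => rfl
  have hΨX : Ψ X = Y := by
    rw [hΨ, Polynomial.coe_X, hYdef]
  have hΨC : ∀ a : ℚ, Ψ (C a) = algebraMap ℚ (LaurentSeries ℚ) a := by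
    intro a
    rw [hΨ, Polynomial.coe_C]
    show (HahnSeries.ofPowerSeries ℤ ℚ) (PowerSeries.C a) = _
    rw [HahnSeries.ofPowerSeries_C]
    simp [HahnSeries.algebraMap_apply]
  have hrsum : r = ∑ i ∈ range (N + 1), C (r.coeff i) * X ^ i := by
    conv_lhs => rw [as_sum_range' r (N + 1) (by omega)]
    exact sum_congr rfl fun i _ => (C_mul_X_pow_eq_monomial).symm
  rw [← hΨ, hrsum, reflect_sum, map_sum]
  unfold pev
  rw [map_sum, Finset.sum_mul]
  refine Finset.sum_congr rfl fun i hi => ?_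
  have hiN : i ≤ N := by simpa [Nat.lt_succ_iff] using hi
  rw [reflect_C_mul, reflect_monomial, revAt_le hiN]
  rw [map_mul (Ψ), map_pow, hΨX, hΨC]
  rw [map_mul, map_pow, aeval_C, aeval_X]
  have hxx : (xx : LaurentSeries ℚ) = Y⁻¹ := rfl
  have hsplit : Y ^ N = Y ^ i * Y ^ (N - i) := by
    rw [← pow_add]; congr 1; omega
  rw [hxx, mul_assoc, inv_pow, hsplit, inv_mul_cancel_left₀ (pow_ne_zero i Yne)]

/-- For `u ∈ ℚ \ {0, 1}`, the Laurent series
`g_u(x) = x⁻¹∏_{t≥0}(1 + u x^{-2^t})` is not a rational function. -/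
theorem gU_not_rational (u : ℚ) (h0 : u ≠ 0) (h1 : u ≠ 1) :
    ¬ ∃ p q : Polynomial ℚ, q ≠ 0 ∧ gU u * pev q = pev p := by
  rintro ⟨p, q, hq, hEq⟩
  set N := max p.natDegree q.natDegree with hN
  have hpN : p.natDegree ≤ N := le_max_left _ _
  have hqN : q.natDegree ≤ N := le_max_right _ _
  set f : PowerSeries ℚ := infProd (1 + C u * X) 2 with hf
  have hgU : gU u = ((PowerSeries.X * f : PowerSeries ℚ) : LaurentSeries ℚ) := by
    rw [gU, xx, inv_inv, PowerSeries.coe_mul, hf]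
  have h1' : ((PowerSeries.X * f : PowerSeries ℚ) : LaurentSeries ℚ)
      * (((reflect N q : ℚ[X]) : PowerSeries ℚ) : LaurentSeries ℚ)
      = (((reflect N p : ℚ[X]) : PowerSeries ℚ) : LaurentSeries ℚ) := by
    rw [← pev_mul_pow N q hqN, ← pev_mul_pow N p hpN, ← hgU, ← mul_assoc, hEq]
  have h2 : (PowerSeries.X * f) * ((reflect N q : ℚ[X]) : PowerSeries ℚ)
      = ((reflect N p : ℚ[X]) : PowerSeries ℚ) := by
    apply HahnSeries.ofPowerSeries_injective (Γ := ℤ) (R := ℚ)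
    rw [← PowerSeries.coe_mul] at h1'
    exact h1'
  set c : ℕ → ℚ := fun i => if i ≤ N then q.coeff i else 0 with hc
  have hrec : ∀ j : ℕ, ∑ i ∈ range (N + 1), c i * u ^ sB (j + i) = 0 := by
    intro j
    have hsum : ∑ k ∈ range (j + N + 1), (reflect N q).coeff k * u ^ sB (j + N - k) = 0 := by
      have hco := congrArg (PowerSeries.coeff (j + N + 1)) h2
      rw [mul_assoc, PowerSeries.coeff_succ_X_mul, mul_comm f, PowerSeries.coeff_mul,
        Finset.Nat.sum_antidiagonal_eq_sum_range_succ_mk] at hco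
      simp only [Polynomial.coeff_coe] at hco
      rw [coeff_eq_zero_of_natDegree_lt
        (lt_of_le_of_lt (natDegree_reflect_le N p hpN) (by omega))] at hco
      rw [← hco]
      refine sum_congr rfl fun k hk => ?_
      rw [hf, infProd_coeff]
    have htrim : ∑ k ∈ range (N + 1), (reflect N q).coeff k * u ^ sB (j + N - k) = 0 := by
      have hss := sum_subset (f := fun k => (reflect N q).coeff k * u ^ sB (j + N - k))
        (range_subset_range.2 (by omega : N + 1 ≤ j + N + 1)) (fun k _ hk => by
          simp [coeff_eq_zero_of_natDegree_lt
            (lt_of_le_of_lt (natDegree_reflect_le N q hqN) (by simpa using hk))])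
      rw [hss]
      exact hsum
    have hreflect := Finset.sum_range_reflect
      (fun k => (reflect N q).coeff k * u ^ sB (j + N - k)) (N + 1)
    rw [← hreflect] at htrim
    rw [← htrim]
    refine sum_congr rfl fun i hi => ?_
    have hiN : i ≤ N := by simpa [Nat.lt_succ_iff] using hi
    have e1 : N + 1 - 1 - i = N - i := by omega
    have e2 : j + N - (N - i) = j + i := by omega
    have e3 : N - (N - i) = i := by omega
    simp only [e1, coeff_reflect, revAt_le (by omega : N - i ≤ N), e2, e3]
    rw [hc]
    simp only [if_pos hiN]
  exact key u h0 h1 (N + 1) c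
    ⟨q.natDegree, by omega, by rw [hc]; simp only [if_pos hqN]; exact mt leadingCoeff_eq_zero.mp hq⟩
    (fun i hi => by rw [hc]; exact if_neg (by omega))
    hrec


end
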